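/- Let ℚ(a, s) be the field of rational functions in two variables a and s over ℚ, let z = s − s⁻¹, and for partitions λ, μ define c_{λ,μ} = z(a C_λ(s²) − a⁻¹ C_μ(s⁻²)) + (a − a⁻¹)/z ∈ ℚ(a, s). Then the map (λ, μ) ↦ c_{λ,μ} is injective on ordered pairs of partitions: c_{λ,μ} = c_{λ′,μ′} implies λ = λ′ and μ = μ′. -/

import Mathlib

/-- A partition: a finite non-increasing list of positive integers. -/
structure YPartition where
  parts : List ℕ
  pos : ∀ p ∈ parts, 0 < p
  sorted : parts.Pairwise (· ≥ ·)

/-- The field `ℚ(a, s)` of rational functions in two variables over `ℚ`, realized as an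
iterated rational function field. -/
abbrev QasField : Type := RatFunc (RatFunc ℚ)

/-- The variable `a` in `ℚ(a, s)`. -/
noncomputable def aVar : QasField := RatFunc.C RatFunc.X

/-- The variable `s` in `ℚ(a, s)`. -/
noncomputable def sVar : QasField := RatFunc.X

/-- `z = s - s⁻¹` in `ℚ(a, s)`. -/
noncomputable def zVar : QasField := sVar - sVar⁻¹

/-- The evaluation `C_λ(s^(2ε)) = Σ_{(i,j) ∈ Y(λ)} s^(2ε(j-i))` of the content polynomial
of `λ` at `q = s^(2ε)` inside `ℚ(a, s)`; we use `ε = 1` for `C_λ(s²)` and `ε = -1` for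
`C_λ(s⁻²)`.  Rows and columns are indexed from `0`; the box in (0-indexed) row `i` and
column `j` has content `j - i`. -/
noncomputable def contentEval (ε : ℤ) (lam : YPartition) : QasField :=
  ∑ i ∈ Finset.range lam.parts.length, ∑ j ∈ Finset.range (lam.parts.getD i 0),
    sVar ^ (2 * ε * ((j : ℤ) - (i : ℤ)))

/-- The meridian eigenvalue `c_{λ,μ} = z(a C_λ(s²) − a⁻¹ C_μ(s⁻²)) + (a − a⁻¹)/z`. -/
noncomputable def meridianEigenvalue (lam mu : YPartition) : QasField :=
  zVar * (aVar * contentEval 1 lam - aVar⁻¹ * contentEval (-1) mu) +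
    (aVar - aVar⁻¹) / zVar

/-! ### Auxiliary lemmas -/

open Polynomial in
lemma rf_inj {F : Type*} [Field F] {p q : F[X]}
    (h : algebraMap F[X] (RatFunc F) p = algebraMap F[X] (RatFunc F) q) : p = q :=
  RatFunc.algebraMap_injective F h

/-- Linear independence of (shifted) powers of `X` in `RatFunc`. -/
lemma zpow_coeff_eq {F : Type*} [Field F] (M N : ℕ) (f g : ℕ → F)
    (h : ∑ m ∈ Finset.range M, RatFunc.C (f m) * (RatFunc.X : RatFunc F) ^ ((m : ℤ) - N)
       = ∑ m ∈ Finset.range M, RatFunc.C (g m) * (RatFunc.X : RatFunc F) ^ ((m : ℤ) - N)) :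
    ∀ m ∈ Finset.range M, f m = g m := by
  have hX : (RatFunc.X : RatFunc F) ≠ 0 := RatFunc.X_ne_zero
  have key : ∀ (f : ℕ → F),
      (RatFunc.X : RatFunc F) ^ (N : ℤ) *
        (∑ m ∈ Finset.range M, RatFunc.C (f m) * (RatFunc.X : RatFunc F) ^ ((m : ℤ) - N))
      = algebraMap (Polynomial F) (RatFunc F)
          (∑ m ∈ Finset.range M, Polynomial.monomial m (f m)) := by
    intro f
    rw [Finset.mul_sum, map_sum]
    refine Finset.sum_congr rfl fun m _ => ?_
    rw [← Polynomial.C_mul_X_pow_eq_monomial, map_mul, map_pow,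
      RatFunc.algebraMap_C, RatFunc.algebraMap_X]
    rw [show (RatFunc.X : RatFunc F) ^ m = (RatFunc.X : RatFunc F) ^ (m : ℤ) from
      (zpow_natCast _ m).symm,
      show (m : ℤ) = (N : ℤ) + ((m : ℤ) - N) by ring_nf, zpow_add₀ hX]
    ring
  have h2 : (∑ m ∈ Finset.range M, Polynomial.monomial m (f m))
      = ∑ m ∈ Finset.range M, Polynomial.monomial m (g m) := by
    apply rf_inj
    rw [← key, ← key, h]
  intro m hm
  have := congrArg (Polynomial.coeff · m) h2
  simpa [Polynomial.finset_sum_coeff, Polynomial.coeff_monomial,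
    Finset.sum_ite_eq' (Finset.range M), hm] using this

/-- Number of boxes of the Young diagram of `l` with content `k`. -/
def cc (l : List ℕ) (k : ℤ) : ℕ :=
  ∑ i ∈ Finset.range l.length, ∑ j ∈ Finset.range (l.getD i 0),
    if (j : ℤ) - (i : ℤ) = k then 1 else 0

lemma cc_cons (a : ℕ) (t : List ℕ) (k : ℤ) :
    cc (a :: t) k = (if 0 ≤ k ∧ k < a then 1 else 0) + cc t (k + 1) := by
  unfold cc
  rw [List.length_cons, Finset.sum_range_succ', add_comm]
  congr 1
  · show (∑ j ∈ Finset.range ((a :: t).getD 0 0),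
        if (j : ℤ) - ((0:ℕ) : ℤ) = k then 1 else 0) = _
    simp only [List.getD_cons_zero, Nat.cast_zero, sub_zero]
    rcases Classical.em (0 ≤ k ∧ k < a) with hk | hk
    · rw [if_pos hk, Finset.sum_eq_single k.toNat]
      · rw [if_pos (by omega)]
      · intro b hb hne; rw [if_neg]; omega
      · intro hb; rw [Finset.mem_range] at hb; exfalso; omega
    · rw [if_neg hk, Finset.sum_eq_zero]
      intro b hb; rw [Finset.mem_range] at hb; rw [if_neg]; omega
  · refine Finset.sum_congr rfl fun i hi => ?_
    show (∑ j ∈ Finset.range ((a :: t).getD (i+1) 0),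
        if (j : ℤ) - ((i+1:ℕ) : ℤ) = k then 1 else 0) = _
    simp only [List.getD_cons_succ]
    refine Finset.sum_congr rfl fun j hj => ?_
    have : ((j : ℤ) - ((i+1:ℕ) : ℤ) = k) ↔ ((j : ℤ) - (i : ℤ) = k + 1) := by
      push_cast; omega
    simp only [this]

lemma cc_eq_zero_of_ge (l : List ℕ) (a : ℕ) (hle : ∀ p ∈ l, p ≤ a) (k : ℤ)
    (hk : (a : ℤ) ≤ k) : cc l k = 0 := by
  unfold cc
  refine Finset.sum_eq_zero fun i hi => Finset.sum_eq_zero fun j hj => ?_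
  simp only [Finset.mem_range] at hi hj
  have : l.getD i 0 ≤ a := by
    rw [List.getD_eq_getElem l 0 hi]
    exact hle _ (l.getElem_mem hi)
  rw [if_neg]; omega

lemma cc_cons_pos (a : ℕ) (t : List ℕ) (ha : 0 < a) : cc (a :: t) ((a : ℤ) - 1) ≠ 0 := by
  rw [cc_cons, if_pos (by omega)]
  omega

lemma cc_inj : ∀ (l l' : List ℕ), (∀ p ∈ l, 0 < p) → l.Pairwise (· ≥ ·) →
    (∀ p ∈ l', 0 < p) → l'.Pairwise (· ≥ ·) →
    (∀ k, cc l k = cc l' k) → l = l'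
  | [], [], _, _, _, _, _ => rfl
  | [], (a :: t), _, _, hp', _, h => by
      exfalso
      exact cc_cons_pos a t (hp' a (by simp)) (by rw [← h]; simp [cc])
  | (a :: t), [], hp, _, _, _, h => by
      exfalso
      exact cc_cons_pos a t (hp a (by simp)) (by rw [h]; simp [cc])
  | (a :: t), (a' :: t'), hp, hs, hp', hs', h => by
      have ha : 0 < a := hp a (by simp)
      have ha' : 0 < a' := hp' a' (by simp)
      have hbd : ∀ p ∈ a :: t, p ≤ a := by
        intro p hpmem
        rcases List.mem_cons.1 hpmem with rfl | hmem
        · exact le_refl _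
        · exact (List.pairwise_cons.1 hs).1 p hmem
      have hbd' : ∀ p ∈ a' :: t', p ≤ a' := by
        intro p hpmem
        rcases List.mem_cons.1 hpmem with rfl | hmem
        · exact le_refl _
        · exact (List.pairwise_cons.1 hs').1 p hmem
      have haa : a = a' := by
        by_contra hne
        rcases Nat.lt_or_ge a a' with hlt | hge
        · exact cc_cons_pos a' t' ha'
            (by rw [← h]; exact cc_eq_zero_of_ge _ a hbd _ (by omega))
        · have : a' < a := by omega
          exact cc_cons_pos a t ha
            (by rw [h]; exact cc_eq_zero_of_ge _ a' hbd' _ (by omega))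
      subst haa
      have htail : t = t' := by
        refine cc_inj t t' (fun p hp2 => hp p (by simp [hp2]))
          (List.pairwise_cons.1 hs).2 (fun p hp2 => hp' p (by simp [hp2]))
          (List.pairwise_cons.1 hs').2 ?_
        intro k
        have := h (k - 1)
        rw [cc_cons, cc_cons] at this
        simpa using this
      rw [htail]

/-- Number of boxes with `2ε·content = k`. -/
def cnt (ε : ℤ) (l : List ℕ) (k : ℤ) : ℕ :=
  ∑ i ∈ Finset.range l.length, ∑ j ∈ Finset.range (l.getD i 0),
    if 2 * ε * ((j : ℤ) - (i : ℤ)) = k then 1 else 0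

/-- A size bound for a diagram. -/
def Nb (l : List ℕ) : ℕ := l.length + l.sum

lemma getD_le_sum : ∀ (l : List ℕ) (i : ℕ), l.getD i 0 ≤ l.sum
  | [], _ => by simp
  | (a :: t), 0 => by simp
  | (a :: t), (i+1) => by
      simpa using le_trans (getD_le_sum t i) (by simp [List.sum_cons])

lemma cnt_eq_zero {ε : ℤ} (hε : ε = 1 ∨ ε = -1) (l : List ℕ) (k : ℤ)
    (hk : 2 * (Nb l : ℤ) < k ∨ k < -(2 * (Nb l : ℤ))) : cnt ε l k = 0 := by
  unfold cnt
  refine Finset.sum_eq_zero fun i hi => Finset.sum_eq_zero fun j hj => ?_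
  simp only [Finset.mem_range] at hi hj
  have h1 : (i : ℤ) < l.length := by exact_mod_cast hi
  have h2 : (j : ℤ) < l.sum := by
    exact_mod_cast lt_of_lt_of_le hj (getD_le_sum l i)
  have h3 : (Nb l : ℤ) = (l.length : ℤ) + l.sum := by simp [Nb]
  rcases hε with rfl | rfl <;> (rw [if_neg]; omega)

lemma cnt_spec {ε : ℤ} (hε : ε = 1 ∨ ε = -1) (l : List ℕ) (m : ℤ) :
    cnt ε l (2 * ε * m) = cc l m := by
  unfold cnt cc
  refine Finset.sum_congr rfl fun i _ => Finset.sum_congr rfl fun j _ => ?_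
  have : (2 * ε * ((j : ℤ) - i) = 2 * ε * m) ↔ ((j : ℤ) - i = m) := by
    rcases hε with rfl | rfl <;> omega
  simp only [this]

lemma contentEval_expand (ε : ℤ) (lam : YPartition) (N : ℕ)
    (hb : ∀ i ∈ Finset.range lam.parts.length, ∀ j ∈ Finset.range (lam.parts.getD i 0),
      -(N : ℤ) ≤ 2 * ε * ((j : ℤ) - i) ∧ 2 * ε * ((j : ℤ) - i) ≤ N) :
    contentEval ε lam = ∑ m ∈ Finset.range (2 * N + 1),
      RatFunc.C ((cnt ε lam.parts ((m : ℤ) - N) : RatFunc ℚ)) * sVar ^ ((m : ℤ) - (N : ℤ)) := by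
  rw [eq_comm]
  unfold contentEval cnt
  simp only [map_natCast]
  simp only [Nat.cast_sum, Nat.cast_ite, Nat.cast_one, Nat.cast_zero,
    Finset.sum_mul, ite_mul, one_mul, zero_mul]
  rw [Finset.sum_comm]
  refine Finset.sum_congr rfl fun i hi => ?_
  rw [Finset.sum_comm]
  refine Finset.sum_congr rfl fun j hj => ?_
  obtain ⟨hb1, hb2⟩ := hb i hi j hj
  have he : (((2 * ε * ((j : ℤ) - i) + N).toNat : ℤ)) - N = 2 * ε * ((j : ℤ) - i) := by
    omega
  rw [Finset.sum_eq_single ((2 * ε * ((j : ℤ) - i) + N).toNat)]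
  · rw [if_pos (by omega), he]
  · intro b hb3 hne
    rw [if_neg]
    simp only [Finset.mem_range] at hb3
    omega
  · intro habs
    exfalso
    exact habs (Finset.mem_range.2 (by omega))

lemma X_sq_ne_one {F : Type*} [Field F] : (RatFunc.X : RatFunc F) ^ 2 ≠ 1 := by
  intro hc
  have hp : (Polynomial.X : Polynomial F) ^ 2 = 1 := by
    apply rf_inj
    rw [map_pow, map_one, RatFunc.algebraMap_X, hc]
  have := congrArg (Polynomial.coeff · 2) hp
  simp [Polynomial.coeff_X_pow, Polynomial.coeff_one] at this

lemma zVar_ne_zero : zVar ≠ 0 := by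
  unfold zVar sVar
  intro hc
  have hX : (RatFunc.X : QasField) ≠ 0 := RatFunc.X_ne_zero
  have h1 : (RatFunc.X : QasField) = RatFunc.X⁻¹ := sub_eq_zero.1 hc
  apply X_sq_ne_one (F := RatFunc ℚ)
  rw [pow_two]
  nth_rewrite 2 [h1]
  exact mul_inv_cancel₀ hX

lemma aVar_ne_zero : aVar ≠ 0 := by
  unfold aVar
  intro hc
  have hinj : Function.Injective (RatFunc.C : RatFunc ℚ →+* QasField) :=
    RingHom.injective _
  exact RatFunc.X_ne_zero (hinj (by rw [hc, map_zero]))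

lemma inner_cancel (n m n' m' : ℕ)
    (h : (RatFunc.X : RatFunc ℚ) ^ 2 * (n : RatFunc ℚ) + (m : RatFunc ℚ)
       = RatFunc.X ^ 2 * (n' : RatFunc ℚ) + (m' : RatFunc ℚ)) :
    n = n' ∧ m = m' := by
  have hp : (Polynomial.X : Polynomial ℚ) ^ 2 * (n : Polynomial ℚ) + (m : Polynomial ℚ)
      = Polynomial.X ^ 2 * (n' : Polynomial ℚ) + (m' : Polynomial ℚ) := by
    apply rf_inj
    simp only [map_add, map_mul, map_pow, map_natCast, RatFunc.algebraMap_X]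
    exact h
  have key : ∀ k : ℕ, (Polynomial.X ^ 2 * (n : Polynomial ℚ) + (m : Polynomial ℚ)).coeff k
      = (Polynomial.X ^ 2 * (n' : Polynomial ℚ) + (m' : Polynomial ℚ)).coeff k :=
    fun k => congrArg (Polynomial.coeff · k) hp
  have c2 := key 2
  have c0 := key 0
  rw [show ((n : Polynomial ℚ)) = Polynomial.C (n : ℚ) by simp,
    show ((n' : Polynomial ℚ)) = Polynomial.C (n' : ℚ) by simp,
    show ((m : Polynomial ℚ)) = Polynomial.C (m : ℚ) by simp,
    show ((m' : Polynomial ℚ)) = Polynomial.C (m' : ℚ) by simp] at c2 c0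
  simp only [Polynomial.coeff_add, Polynomial.coeff_X_pow_mul, mul_comm,
    Polynomial.coeff_C_mul, Polynomial.coeff_C] at c2 c0
  constructor
  · simp at c2; exact_mod_cast c2
  · simp at c0; exact_mod_cast c0

lemma hb_aux {ε : ℤ} (hε : ε = 1 ∨ ε = -1) (l : List ℕ) (N : ℕ) (hN : 2 * Nb l ≤ N) :
    ∀ i ∈ Finset.range l.length, ∀ j ∈ Finset.range (l.getD i 0),
      -(N : ℤ) ≤ 2 * ε * ((j : ℤ) - i) ∧ 2 * ε * ((j : ℤ) - i) ≤ N := by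
  intro i hi j hj
  simp only [Finset.mem_range] at hi hj
  have h1 : (i : ℤ) < l.length := by exact_mod_cast hi
  have h2 : (j : ℤ) < l.sum := by exact_mod_cast lt_of_lt_of_le hj (getD_le_sum l i)
  have h3 : (Nb l : ℤ) = (l.length : ℤ) + l.sum := by simp [Nb]
  have h4 : 2 * (Nb l : ℤ) ≤ N := by exact_mod_cast hN
  rcases hε with rfl | rfl <;> constructor <;> omega


/-- The map `(λ, μ) ↦ c_{λ,μ}` is injective on ordered pairs of partitions:
`c_{λ,μ} = c_{λ′,μ′}` implies `λ = λ′` and `μ = μ′`. -/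
theorem meridianEigenvalue_injective (lam mu lam' mu' : YPartition)
    (h : meridianEigenvalue lam mu = meridianEigenvalue lam' mu') :
    lam = lam' ∧ mu = mu' := by
  have ha := aVar_ne_zero
  unfold meridianEigenvalue at h
  have h1 := add_right_cancel h
  have h2 := mul_left_cancel₀ zVar_ne_zero h1
  have key : ∀ X Y : QasField, aVar * (aVar * X - aVar⁻¹ * Y) = aVar ^ 2 * X - Y := by
    intro X Y
    field_simp
  have h2' := congrArg (fun x => aVar * x) h2
  simp only [key] at h2'
  have h3 : aVar ^ 2 * contentEval 1 lam + contentEval (-1) mu'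
      = aVar ^ 2 * contentEval 1 lam' + contentEval (-1) mu := by
    linear_combination h2'
  obtain ⟨N, hN1, hN2, hN3, hN4⟩ : ∃ N : ℕ, 2 * Nb lam.parts ≤ N ∧ 2 * Nb lam'.parts ≤ N ∧
      2 * Nb mu.parts ≤ N ∧ 2 * Nb mu'.parts ≤ N :=
    ⟨2 * (Nb lam.parts + Nb lam'.parts + Nb mu.parts + Nb mu'.parts),
      by omega, by omega, by omega, by omega⟩
  rw [contentEval_expand 1 lam N (hb_aux (Or.inl rfl) _ _ hN1),
      contentEval_expand 1 lam' N (hb_aux (Or.inl rfl) _ _ hN2),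
      contentEval_expand (-1) mu N (hb_aux (Or.inr rfl) _ _ hN3),
      contentEval_expand (-1) mu' N (hb_aux (Or.inr rfl) _ _ hN4)] at h3
  have hcomb : ∀ c d : ℤ → ℕ,
      aVar ^ 2 * (∑ m ∈ Finset.range (2 * N + 1),
          RatFunc.C ((c ((m : ℤ) - N) : RatFunc ℚ)) * sVar ^ ((m : ℤ) - (N : ℤ)))
        + (∑ m ∈ Finset.range (2 * N + 1),
          RatFunc.C ((d ((m : ℤ) - N) : RatFunc ℚ)) * sVar ^ ((m : ℤ) - (N : ℤ)))
      = ∑ m ∈ Finset.range (2 * N + 1),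
          RatFunc.C (RatFunc.X ^ 2 * (c ((m : ℤ) - N) : RatFunc ℚ)
            + (d ((m : ℤ) - N) : RatFunc ℚ)) * sVar ^ ((m : ℤ) - (N : ℤ)) := by
    intro c d
    rw [Finset.mul_sum, ← Finset.sum_add_distrib]
    refine Finset.sum_congr rfl fun m _ => ?_
    rw [map_add, map_mul, map_pow]
    unfold aVar
    ring
  rw [hcomb (cnt 1 lam.parts) (cnt (-1) mu'.parts),
      hcomb (cnt 1 lam'.parts) (cnt (-1) mu.parts)] at h3
  unfold sVar at h3
  have hco := zpow_coeff_eq (2 * N + 1) N _ _ h3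
  have hpt : ∀ k : ℤ, cnt 1 lam.parts k = cnt 1 lam'.parts k ∧
      cnt (-1) mu'.parts k = cnt (-1) mu.parts k := by
    intro k
    rcases Classical.em (-(N : ℤ) ≤ k ∧ k ≤ N) with hk | hk
    · have hm : (((k + N).toNat : ℤ)) - N = k := by omega
      have hc := hco (k + N).toNat (Finset.mem_range.2 (by omega))
      rw [hm] at hc
      exact inner_cancel _ _ _ _ hc
    · refine ⟨?_, ?_⟩
      · rw [cnt_eq_zero (Or.inl rfl) _ _ (by omega), cnt_eq_zero (Or.inl rfl) _ _ (by omega)]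
      · rw [cnt_eq_zero (Or.inr rfl) _ _ (by omega), cnt_eq_zero (Or.inr rfl) _ _ (by omega)]
  have hccl : ∀ m : ℤ, cc lam.parts m = cc lam'.parts m := by
    intro m
    have := (hpt (2 * 1 * m)).1
    rwa [cnt_spec (Or.inl rfl), cnt_spec (Or.inl rfl)] at this
  have hccm : ∀ m : ℤ, cc mu.parts m = cc mu'.parts m := by
    intro m
    have := (hpt (2 * (-1) * m)).2
    rw [cnt_spec (Or.inr rfl), cnt_spec (Or.inr rfl)] at this
    exact this.symm
  have e1 : lam.parts = lam'.parts :=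
    cc_inj _ _ lam.pos lam.sorted lam'.pos lam'.sorted hccl
  have e2 : mu.parts = mu'.parts :=
    cc_inj _ _ mu.pos mu.sorted mu'.pos mu'.sorted hccm
  refine ⟨?_, ?_⟩
  · cases lam; cases lam'; cases e1; rfl
  · cases mu; cases mu'; cases e2; rfl
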